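/- (Promotion of P-tensors.) Let χ be an m'×m real matrix, and for a tensor F : (Fin k → Fin m) → ℝ define its promotion F̃ : (Fin k → Fin m') → ℝ by F̃(i₁,…,i_k) = Σ_{j₁,…,j_k ∈ Fin m} χ_{i₁,j₁} χ_{i₂,j₂} ⋯ χ_{i_k,j_k} F(j₁,…,j_k). Then for every permutation π of Fin m', the promotion of F computed with the row-permuted matrix P_π χ equals π • F̃, where (π • F̃)(i) = F̃(π⁻¹ ∘ i). Consequently, if F is a k-th order P-tensor with respect to an ordered receptive field (e_{p₁},…,e_{p_m}) contained in an ordered receptive field (e_{q₁},…,e_{q_{m'}}), and χ is the indicator matrix with χ_{i,j} = 1 iff q_i = p_j, then F̃ is a k-th order P-tensor with respect to permutations of (e_{q₁},…,e_{q_{m'}}). -/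
import Mathlib


/-- The action of a permutation `π` of `Fin m'` on a `k`-th order tensor:
`(π • T)(i) = T(π⁻¹ ∘ i)`. -/
def permAct {m' k : ℕ} (π : Equiv.Perm (Fin m')) (T : (Fin k → Fin m') → ℝ) :
    (Fin k → Fin m') → ℝ :=
  fun i => T (fun t => π⁻¹ (i t))

/-- The permutation matrix of `π`: entry `(i,j)` is `1` iff `π j = i`. -/
def permMat {m' : ℕ} (π : Equiv.Perm (Fin m')) : Matrix (Fin m') (Fin m') ℝ :=
  fun i j => if π j = i then 1 else 0

/-- The promotion of a `k`-th order tensor `F` of dimension `m` along a matrix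
`χ : m' × m`:  `F̃(i₁,…,i_k) = Σ_{j₁,…,j_k} χ_{i₁,j₁} ⋯ χ_{i_k,j_k} F(j₁,…,j_k)`. -/
def promote {m m' k : ℕ} (χ : Matrix (Fin m') (Fin m) ℝ)
    (F : (Fin k → Fin m) → ℝ) : (Fin k → Fin m') → ℝ :=
  fun i => ∑ j : Fin k → Fin m, (∏ t, χ (i t) (j t)) * F j

/-- Promotion of P-tensors: for every permutation `π` of `Fin m'`, the
promotion of `F` computed with the row-permuted matrix `P_π χ` equals
`π • (promote χ F)`.  Hence the promotion of a `k`-th order P-tensor is a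
`k`-th order P-tensor with respect to the larger receptive field. -/
theorem promote_permMat_mul {m m' k : ℕ} (χ : Matrix (Fin m') (Fin m) ℝ)
    (F : (Fin k → Fin m) → ℝ) (π : Equiv.Perm (Fin m')) :
    promote (permMat π * χ) F = permAct π (promote χ F) := by
  have hentry : ∀ i j, (permMat π * χ) i j = χ (π⁻¹ i) j := by
    intro i j
    simp only [Matrix.mul_apply, permMat]
    rw [Finset.sum_eq_single (π⁻¹ i)]
    · simp
    · intro b _ hb
      have : π b ≠ i := fun h => hb (by simp [← h])
      simp [this]
    · simp
  funext i
  simp only [promote, permAct, hentry]
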